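/- Let H be a real Hilbert space, F ⊆ H a nonempty convex compact set, and R : H → ℝ a differentiable function that is 1-strongly convex on F with respect to the norm of H. Define the Bregman divergence D_R(f, g) = R(f) − R(g) − ⟨∇R(g), f − g⟩. Let η > 0, let x_1,…,x_T ∈ H be arbitrary, M_1 = 0 and M_2,…,M_T ∈ H arbitrary. Define f_1 = g_1 = argmin_{g∈F} R(g), and for each t: g_{t+1} = argmin_{g∈F} [ η⟨g, x_t⟩ + D_R(g, g_t) ] and f_{t+1} = argmin_{f∈F} [ η⟨f, M_{t+1}⟩ + D_R(f, g_{t+1}) ] (assume these minimizers exist). Then for every f* ∈ F: Σ_{t=1}^T ⟨f_t, x_t⟩ − Σ_{t=1}^T ⟨f*, x_t⟩ ≤ η^{-1} R_max² + (η/2) Σ_{t=1}^T ‖x_t − M_t‖², where R_max² = max_{f∈F} R(f) − min_{f∈F} R(f). -/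

import Mathlib

open Finset
open Filter Topology
open scoped RealInnerProductSpace


section aux
variable {H : Type*} [NormedAddCommGroup H] [InnerProductSpace ℝ H] [CompleteSpace H]

lemma omd_fderiv_eq (R : H → ℝ) (hRdiff : Differentiable ℝ R) (u d : H) :
    fderiv ℝ R u d = ⟪gradient R u, d⟫ := by
  rw [(hRdiff u).hasGradientAt.hasFDerivAt.fderiv]
  exact (InnerProductSpace.toDual_apply_apply).symm

lemma omd_slope_tendsto (φ : H → ℝ) {b : H} (hφ : DifferentiableAt ℝ φ b) (d : H) :
    Tendsto (fun s : ℝ => (φ (b + s • d) - φ b) / s) (𝓝[>] (0:ℝ))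
      (𝓝 (fderiv ℝ φ b d)) := by
  have hcurve : HasDerivAt (fun s : ℝ => b + s • d) d 0 := by
    simpa using ((hasDerivAt_id (0:ℝ)).smul_const d).const_add b
  have h0 : b + (0:ℝ) • d = b := by simp
  have hψ : HasDerivAt (fun s : ℝ => φ (b + s • d)) (fderiv ℝ φ b d) 0 := by
    have := (h0.symm ▸ hφ.hasFDerivAt : HasFDerivAt φ (fderiv ℝ φ b) (b + (0:ℝ) • d)).comp_hasDerivAt (f := fun s : ℝ => b + s • d) 0 hcurve
    simpa [Function.comp_def] using this
  have h1 := hasDerivAt_iff_tendsto_slope.mp hψ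
  have h2 : (𝓝[>] (0:ℝ)) ≤ 𝓝[≠] (0:ℝ) :=
    nhdsWithin_mono _ (fun s hs => ne_of_gt hs)
  refine (h1.mono_left h2).congr (fun s => ?_)
  simp [slope_def_field, h0]


lemma omd_grad_ineq {F : Set H} (R : H → ℝ) (hRdiff : Differentiable ℝ R)
    (hRsc : StrongConvexOn F 1 R) {a b : H} (ha : a ∈ F) (hb : b ∈ F) :
    ⟪gradient R b, a - b⟫ + 1/2 * ‖a - b‖^2 ≤ R a - R b := by
  set c : ℝ := R a - R b - 1/2 * ‖a - b‖^2 with hc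
  set K : ℝ := 1/2 * ‖a - b‖^2 with hK
  have h1 : fderiv ℝ R b (a - b) ≤ c := by
    have htg : Tendsto (fun s : ℝ => c + s * K) (𝓝[>] (0:ℝ)) (𝓝 c) := by
      have : Continuous (fun s : ℝ => c + s * K) := by continuity
      have h := this.tendsto 0
      simpa using h.mono_left nhdsWithin_le_nhds
    refine le_of_tendsto_of_tendsto (omd_slope_tendsto R (hRdiff b) (a - b)) htg ?_
    filter_upwards [Ioc_mem_nhdsGT (by norm_num : (0:ℝ) < 1)] with s hs
    have hsc := hRsc.2 ha hb hs.1.le (by linarith [hs.2] : (0:ℝ) ≤ 1 - s) (by ring)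
    have hpt : s • a + (1 - s) • b = b + s • (a - b) := by
      rw [smul_sub, sub_smul, one_smul]; abel
    rw [hpt] at hsc
    rw [div_le_iff₀ hs.1]
    simp only [smul_eq_mul] at hsc
    rw [← hK] at hsc
    have hid : (c + s * K) * s = s * R a + (1 - s) * R b - R b - s * (1 - s) * K := by
      rw [hc]; ring
    linarith
  rw [omd_fderiv_eq R hRdiff] at h1
  simp only [hc] at h1
  linarith

lemma omd_foc {F : Set H} (hFconv : Convex ℝ F) (R : H → ℝ) (hRdiff : Differentiable ℝ R)
    (w v : H) {q : H} (hq : q ∈ F)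
    (hmin : ∀ p ∈ F, ⟪w, q⟫ + R q - ⟪v, q⟫ ≤ ⟪w, p⟫ + R p - ⟪v, p⟫)
    {p : H} (hp : p ∈ F) :
    0 ≤ ⟪w, p - q⟫ + ⟪gradient R q, p - q⟫ - ⟪v, p - q⟫ := by
  set φ : H → ℝ := fun u => ⟪w, u⟫ + R u - ⟪v, u⟫ with hφdef
  have hL : HasFDerivAt φ (innerSL ℝ w + fderiv ℝ R q - innerSL ℝ v) q := by
    exact ((innerSL ℝ w).hasFDerivAt.add (hRdiff q).hasFDerivAt).sub (innerSL ℝ v).hasFDerivAt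
  have hφdiff : DifferentiableAt ℝ φ q := hL.differentiableAt
  have hfd : fderiv ℝ φ q (p - q) = ⟪w, p - q⟫ + ⟪gradient R q, p - q⟫ - ⟪v, p - q⟫ := by
    rw [hL.fderiv]
    rw [ContinuousLinearMap.sub_apply, ContinuousLinearMap.add_apply, innerSL_apply_apply,
      innerSL_apply_apply, omd_fderiv_eq R hRdiff]
  rw [← hfd]
  refine ge_of_tendsto (omd_slope_tendsto φ hφdiff (p - q)) ?_
  filter_upwards [Ioc_mem_nhdsGT (by norm_num : (0:ℝ) < 1)] with s hs
  have hmem : q + s • (p - q) ∈ F := by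
    have hpt : s • p + (1 - s) • q = q + s • (p - q) := by
      rw [smul_sub, sub_smul, one_smul]; abel
    rw [← hpt]
    exact hFconv hp hq hs.1.le (by linarith [hs.2]) (by ring)
  have := hmin _ hmem
  have hφle : φ q ≤ φ (q + s • (p - q)) := this
  exact div_nonneg (by linarith) hs.1.le

end aux

/-- **Regret bound for the Optimistic Mirror Descent algorithm.**
`H` a real Hilbert space, `F ⊆ H` nonempty convex compact, `R : H → ℝ` differentiable
and 1-strongly convex on `F`; Bregman divergence
`D_R(f,g) = R f − R g − ⟨∇R g, f − g⟩`.  With `M₁ = 0`, arbitrary `x_t, M_t ∈ H`,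
`f₁ = g₁ = argmin_F R`, `g_{t+1} = argmin_{g∈F} η⟨g,x_t⟩ + D_R(g,g_t)` and
`f_{t+1} = argmin_{f∈F} η⟨f,M_{t+1}⟩ + D_R(f,g_{t+1})`, for every `f* ∈ F`:
`Σ⟨f_t,x_t⟩ − Σ⟨f*,x_t⟩ ≤ η⁻¹ R_max² + (η/2) Σ ‖x_t − M_t‖²`, where
`R_max² = max_{f∈F} R f − min_{f∈F} R f`. -/
theorem stmt_3 {H : Type*} [NormedAddCommGroup H] [InnerProductSpace ℝ H] [CompleteSpace H]
    (F : Set H) (hFne : F.Nonempty) (hFconv : Convex ℝ F) (hFcomp : IsCompact F)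
    (R : H → ℝ) (hRdiff : Differentiable ℝ R) (hRsc : StrongConvexOn F 1 R)
    (η : ℝ) (hη : 0 < η) (T : ℕ)
    (x M : ℕ → H) (hM1 : M 1 = 0)
    (f g : ℕ → H)
    (hfg1 : f 1 = g 1) (hg1 : g 1 ∈ F ∧ ∀ p ∈ F, R (g 1) ≤ R p)
    (hg : ∀ t ∈ Icc 1 T, g (t + 1) ∈ F ∧ ∀ p ∈ F,
      η * ⟪g (t + 1), x t⟫
          + (R (g (t + 1)) - R (g t) - ⟪gradient R (g t), g (t + 1) - g t⟫)
        ≤ η * ⟪p, x t⟫ + (R p - R (g t) - ⟪gradient R (g t), p - g t⟫))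
    (hf : ∀ t ∈ Icc 1 T, f (t + 1) ∈ F ∧ ∀ p ∈ F,
      η * ⟪f (t + 1), M (t + 1)⟫
          + (R (f (t + 1)) - R (g (t + 1)) - ⟪gradient R (g (t + 1)), f (t + 1) - g (t + 1)⟫)
        ≤ η * ⟪p, M (t + 1)⟫ + (R p - R (g (t + 1)) - ⟪gradient R (g (t + 1)), p - g (t + 1)⟫))
    (fstar : H) (hfstar : fstar ∈ F) :
    (∑ t ∈ Icc 1 T, ⟪f t, x t⟫) - (∑ t ∈ Icc 1 T, ⟪fstar, x t⟫)
      ≤ η⁻¹ * (sSup (R '' F) - sInf (R '' F))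
        + η / 2 * ∑ t ∈ Icc 1 T, ‖x t - M t‖ ^ 2 := by
  obtain ⟨Dv, hDv⟩ : ∃ Dv : H → H → ℝ, Dv = fun a b => R a - R b - ⟪gradient R b, a - b⟫ :=
    ⟨_, rfl⟩
  have tp : ∀ a b c : H, ⟪gradient R b, a - b⟫ - ⟪gradient R c, a - b⟫
      = Dv a c - Dv a b - Dv b c := by
    intro a b c
    simp only [hDv, inner_sub_right]
    ring
  have SC : ∀ a ∈ F, ∀ b ∈ F, 1/2 * ‖a - b‖^2 ≤ Dv a b := by
    intro a ha b hb
    have := omd_grad_ineq R hRdiff hRsc ha hb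
    simp only [hDv]; linarith
  have SC0 : ∀ a ∈ F, ∀ b ∈ F, 0 ≤ Dv a b := fun a ha b hb =>
    le_trans (by positivity) (SC a ha b hb)
  have hmemg : ∀ t : ℕ, 1 ≤ t → t ≤ T + 1 → g t ∈ F := by
    intro t h1 h2
    by_cases ht1 : t = 1
    · subst ht1; exact hg1.1
    · obtain ⟨n, rfl⟩ : ∃ n, t = n + 2 := ⟨t - 2, by omega⟩
      exact (hg (n+1) (Finset.mem_Icc.mpr ⟨by omega, by omega⟩)).1
  have hmemf : ∀ t : ℕ, 1 ≤ t → t ≤ T → f t ∈ F := by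
    intro t h1 h2
    by_cases ht1 : t = 1
    · subst ht1; rw [hfg1]; exact hg1.1
    · obtain ⟨n, rfl⟩ : ∃ n, t = n + 2 := ⟨t - 2, by omega⟩
      exact (hf (n+1) (Finset.mem_Icc.mpr ⟨by omega, by omega⟩)).1
  have hsmul : ∀ (u p : H), ⟪η • u, p⟫ = η * ⟪p, u⟫ := by
    intro u p
    rw [real_inner_smul_left, real_inner_comm]
  have keyB : ∀ t ∈ Icc 1 T, η * ⟪g (t+1) - fstar, x t⟫
      ≤ Dv fstar (g t) - Dv fstar (g (t+1)) - Dv (g (t+1)) (g t) := by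
    intro t ht
    have hgmin := (hg t ht).2
    rw [Finset.mem_Icc] at ht
    have hmin : ∀ p ∈ F, ⟪η • x t, g (t+1)⟫ + R (g (t+1)) - ⟪gradient R (g t), g (t+1)⟫
        ≤ ⟪η • x t, p⟫ + R p - ⟪gradient R (g t), p⟫ := by
      intro p hp
      have h := hgmin p hp
      simp only [inner_sub_right] at h
      rw [hsmul, hsmul]
      linarith
    have hfoc := omd_foc hFconv R hRdiff (η • x t) (gradient R (g t))
      (hmemg (t+1) (by omega) (by omega)) hmin hfstar
    rw [hsmul] at hfoc
    have htp := tp fstar (g (t+1)) (g t)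
    have hneg : ⟪g (t+1) - fstar, x t⟫ = -⟪fstar - g (t+1), x t⟫ := by
      rw [← neg_sub, inner_neg_left]
    rw [hneg]
    linarith
  have keyA : ∀ t ∈ Icc 1 T, η * ⟪f t - g (t+1), M t⟫
      ≤ Dv (g (t+1)) (g t) - Dv (g (t+1)) (f t) - Dv (f t) (g t) := by
    intro t ht
    rw [Finset.mem_Icc] at ht
    by_cases ht1 : t = 1
    · subst ht1
      rw [hM1, inner_zero_right, mul_zero, hfg1]
      have hzero : Dv (g 1) (g 1) = 0 := by simp [hDv]
      rw [hzero]
      linarith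
    · obtain ⟨n, rfl⟩ : ∃ n, t = n + 2 := ⟨t - 2, by omega⟩
      have hfmin := (hf (n+1) (Finset.mem_Icc.mpr ⟨by omega, by omega⟩)).2
      simp only [show n+1+1 = n+2 from rfl] at hfmin
      have hmin : ∀ p ∈ F, ⟪η • M (n+2), f (n+2)⟫ + R (f (n+2)) - ⟪gradient R (g (n+2)), f (n+2)⟫
          ≤ ⟪η • M (n+2), p⟫ + R p - ⟪gradient R (g (n+2)), p⟫ := by
        intro p hp
        have h := hfmin p hp
        simp only [inner_sub_right] at h
        rw [hsmul, hsmul]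
        linarith
      have hq : f (n+2) ∈ F := hmemf (n+2) (by omega) (by omega)
      have hp3 : g (n+3) ∈ F := hmemg (n+3) (by omega) (by omega)
      have hfoc := omd_foc hFconv R hRdiff (η • M (n+2)) (gradient R (g (n+2))) hq hmin hp3
      rw [hsmul] at hfoc
      have htp := tp (g (n+3)) (f (n+2)) (g (n+2))
      have hneg : ⟪f (n+2) - g (n+3), M (n+2)⟫ = -⟪g (n+3) - f (n+2), M (n+2)⟫ := by
        rw [← neg_sub, inner_neg_left]
      simp only [show n+2+1 = n+3 from rfl]
      rw [hneg]
      linarith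
  have keyC : ∀ t : ℕ, η * ⟪f t - g (t+1), x t - M t⟫
      ≤ 1/2 * ‖f t - g (t+1)‖^2 + η^2/2 * ‖x t - M t‖^2 := by
    intro t
    have h1 := real_inner_le_norm (f t - g (t+1)) (x t - M t)
    nlinarith [mul_le_mul_of_nonneg_left h1 hη.le,
      sq_nonneg (‖f t - g (t+1)‖ - η * ‖x t - M t‖),
      norm_nonneg (f t - g (t+1)), norm_nonneg (x t - M t)]
  have key : ∀ t ∈ Icc 1 T, η * (⟪f t, x t⟫ - ⟪fstar, x t⟫)
      ≤ (Dv fstar (g t) - Dv fstar (g (t+1))) + η^2/2 * ‖x t - M t‖^2 := by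
    intro t ht
    have hA := keyA t ht
    have hB := keyB t ht
    have hC := keyC t
    rw [Finset.mem_Icc] at ht
    have hsc1 := SC (g (t+1)) (hmemg _ (by omega) (by omega)) (f t)
      (hmemf _ (by omega) (by omega))
    have hsc2 := SC0 (f t) (hmemf _ (by omega) (by omega)) (g t)
      (hmemg _ (by omega) (by omega))
    have hnorm : ‖f t - g (t+1)‖ = ‖g (t+1) - f t‖ := norm_sub_rev _ _
    rw [hnorm] at hC
    have hexp : η * (⟪f t, x t⟫ - ⟪fstar, x t⟫)
        = η * ⟪f t - g (t+1), x t - M t⟫ + η * ⟪f t - g (t+1), M t⟫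
          + η * ⟪g (t+1) - fstar, x t⟫ := by
      simp only [inner_sub_left, inner_sub_right]; ring
    rw [hexp]
    linarith
  have hsum := Finset.sum_le_sum key
  have tele : ∀ (φ : ℕ → ℝ) (n : ℕ), ∑ t ∈ Icc 1 n, (φ t - φ (t+1)) = φ 1 - φ (n+1) := by
    intro φ n
    induction n with
    | zero => simp
    | succ n ih => rw [Finset.sum_Icc_succ_top (by omega), ih]; ring
  have hL : ∑ t ∈ Icc 1 T, (η * (⟪f t, x t⟫ - ⟪fstar, x t⟫))
      = η * ((∑ t ∈ Icc 1 T, ⟪f t, x t⟫) - ∑ t ∈ Icc 1 T, ⟪fstar, x t⟫) := by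
    rw [← Finset.sum_sub_distrib, Finset.mul_sum]
  have hR : ∑ t ∈ Icc 1 T, ((Dv fstar (g t) - Dv fstar (g (t+1))) + η^2/2 * ‖x t - M t‖^2)
      = (Dv fstar (g 1) - Dv fstar (g (T+1))) + η^2/2 * ∑ t ∈ Icc 1 T, ‖x t - M t‖^2 := by
    rw [Finset.sum_add_distrib, tele (fun t => Dv fstar (g t)) T, ← Finset.mul_sum]
  rw [hL, hR] at hsum
  have h1 : 0 ≤ Dv fstar (g (T+1)) :=
    SC0 fstar hfstar (g (T+1)) (hmemg (T+1) (by omega) (by omega))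
  have hfoc1 := omd_foc hFconv R hRdiff (0:H) (0:H) hg1.1
    (fun p hp => by simpa using hg1.2 p hp) hfstar
  simp only [inner_zero_left, add_zero, zero_add, sub_zero] at hfoc1
  have hDg1 : Dv fstar (g 1) ≤ sSup (R '' F) - sInf (R '' F) := by
    have hub : R fstar ≤ sSup (R '' F) :=
      le_csSup ((hFcomp.image hRdiff.continuous).bddAbove) ⟨fstar, hfstar, rfl⟩
    have hlb : sInf (R '' F) ≤ R (g 1) :=
      csInf_le ((hFcomp.image hRdiff.continuous).bddBelow) ⟨g 1, hg1.1, rfl⟩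
    simp only [hDv]
    linarith
  rw [← mul_le_mul_iff_right₀ hη]
  have hrhs : η * (η⁻¹ * (sSup (R '' F) - sInf (R '' F))
      + η / 2 * ∑ t ∈ Icc 1 T, ‖x t - M t‖ ^ 2)
      = (sSup (R '' F) - sInf (R '' F)) + η^2/2 * ∑ t ∈ Icc 1 T, ‖x t - M t‖ ^ 2 := by
    field_simp
  rw [hrhs]
  linarith
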